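/- Let F, F' be collections of vector bundles on a smooth projective curve over a field with injective module maps as in the definition of abelian τ-sheaves, and suppose f: F → F' is a nonzero morphism of abelian τ-sheaves (commuting with all Φ_i and τ_i). Then weight(F) = weight(F'), i.e. d/r = d'/r' where r, d (resp. r', d') are the rank and dimension of F (resp. F'). -/

import Mathlib

set_option maxHeartbeats 1000000
set_option synthInstance.maxHeartbeats 400000


open Polynomial

/-- An abelian `τ`-sheaf of rank `r`, dimension `d` and period `(k,l)` over `L`
(for the curve `C = ℙ¹`, so `Q = F_q(t)` and the generic fibre of the sheaves is
a vector space `V` over `RatFunc L`).  Since the `Φ_i` are injective with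
cokernel supported at `∞`, the sheaves `F_i` are realized as a common
`L[t]`-lattice `M0` (the sections away from `∞`) together with an increasing
chain of `L[1/t]`-lattices `N i` at `∞`, with periodicity `N (i+l) = t^k • N i`
and `dim_L coker Φ_i = d`; `τ` is the Frobenius-semilinear structure map, with
`τ(F_i) ⊆ F_{i+1}` and `dim_L coker τ_i = d`. -/
structure TauSheafData (L : Type) [Field L]
    (σF : RatFunc L →+* RatFunc L)
    (V : Type) [AddCommGroup V] [Module L V] [Module (RatFunc L) V]
    [IsScalarTower L (RatFunc L) V]
    (r d k l : ℕ) : Type where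
  tau : V → V
  tau_add : ∀ x y, tau (x + y) = tau x + tau y
  tau_smul : ∀ (c : RatFunc L) (v : V), tau (c • v) = σF c • tau v
  tau_inj : Function.Injective tau
  rank_eq : Module.finrank (RatFunc L) V = r
  pos_k : 0 < k
  pos_l : 0 < l
  weight_rel : l * d = k * r
  M0 : Submodule L V
  M0_stable : ∀ v ∈ M0, (RatFunc.X : RatFunc L) • v ∈ M0
  M0_fg : ∃ S : Finset V, (M0 : Set V) =
    ↑(Submodule.span L
      (⋃ s ∈ (S : Set V), Set.range fun n : ℕ => ((RatFunc.X : RatFunc L) ^ n) • s))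
  M0_full : Submodule.span (RatFunc L) (M0 : Set V) = ⊤
  tau_M0 : ∀ v ∈ M0, tau v ∈ M0
  coker_tau_dim : Module.finrank L
    (↥M0 ⧸ (Submodule.span L (tau '' M0)).comap M0.subtype) = d
  N : ℤ → Submodule L V
  N_stable : ∀ (i : ℤ), ∀ v ∈ N i, ((RatFunc.X : RatFunc L))⁻¹ • v ∈ N i
  N_fg : ∀ i : ℤ, ∃ S : Finset V, ((N i : Set V)) =
    ↑(Submodule.span L
      (⋃ s ∈ (S : Set V), Set.range fun n : ℕ => (((RatFunc.X : RatFunc L))⁻¹ ^ n) • s))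
  N_full : ∀ i : ℤ, Submodule.span (RatFunc L) ((N i : Set V)) = ⊤
  N_mono : ∀ i : ℤ, N i ≤ N (i + 1)
  N_period : ∀ (i : ℤ) (v : V),
    v ∈ N (i + (l : ℤ)) ↔ ((RatFunc.X : RatFunc L) ^ k)⁻¹ • v ∈ N i
  coker_phi_dim : ∀ i : ℤ, Module.finrank L
    (↥(N (i + 1)) ⧸ (N i).comap (N (i + 1)).subtype) = d
  tau_N : ∀ (i : ℤ), ∀ v ∈ N i, tau v ∈ N (i + 1)

section Aux

variable {L : Type} [Field L] {σF : RatFunc L →+* RatFunc L}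
    {V : Type} [AddCommGroup V] [Module L V] [Module (RatFunc L) V]
    [IsScalarTower L (RatFunc L) V] {r d k l : ℕ}

/-- Iterated periodicity. -/
lemma TauSheafData.iterPeriod (D : TauSheafData L σF V r d k l) (a : ℕ) (i : ℤ) (x : V) :
    x ∈ D.N (i + (l * a : ℕ)) ↔ ((RatFunc.X : RatFunc L) ^ (k * a))⁻¹ • x ∈ D.N i := by
  induction a generalizing i with
  | zero => simp
  | succ a ih =>
      have h1 : (i + (l * (a + 1) : ℕ) : ℤ) = (i + l) + (l * a : ℕ) := by push_cast; ring
      rw [h1, ih (i + l), D.N_period i]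
      have h2 : ((RatFunc.X : RatFunc L) ^ k)⁻¹ • ((RatFunc.X : RatFunc L) ^ (k * a))⁻¹ • x
          = ((RatFunc.X : RatFunc L) ^ (k * (a + 1)))⁻¹ • x := by
        rw [smul_smul, ← mul_inv, ← pow_add]
        congr 2
        ring
      rw [h2]

/-- Monotonicity of the chain `N`. -/
lemma TauSheafData.N_mono' (D : TauSheafData L σF V r d k l) {i j : ℤ} (hij : i ≤ j) :
    D.N i ≤ D.N j := by
  exact Int.leInduction (motive := fun j _ => D.N i ≤ D.N j) le_rfl (fun j _ ih => ih.trans (D.N_mono j)) j hij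

/-- A nonzero vector escapes the chain `N` for small enough index. -/
lemma TauSheafData.escape (D : TauSheafData L σF V r d k l) {w : V} (hw : w ≠ 0) :
    ∃ m : ℤ, w ∉ D.N m := by
  classical
  by_contra hcon
  push_neg at hcon
  obtain ⟨φ, hφ⟩ : ∃ φ : Module.Dual (RatFunc L) V, φ w ≠ 0 := by
    by_contra hc
    push_neg at hc
    exact hw ((Module.forall_dual_apply_eq_zero_iff (RatFunc L) w).mp hc)
  obtain ⟨S, hS⟩ := D.N_fg 0
  set val : Valuation (RatFunc L) (WithZero (Multiplicative ℤ)) :=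
    FunctionField.inftyValuation L with hval
  set γ : WithZero (Multiplicative ℤ) := S.sup fun s => val (φ s) with hγ
  -- the set of elements of valuation at most γ is an L-submodule of RatFunc L
  set Ω : Submodule L (RatFunc L) :=
    { carrier := {c | val c ≤ γ}
      add_mem' := fun hx hy => le_trans (val.map_add _ _) (max_le hx hy)
      zero_mem' := by
        simp only [Set.mem_setOf_eq, map_zero]
        exact zero_le'
      smul_mem' := by
        intro c x hx
        simp only [Set.mem_setOf_eq] at hx ⊢
        rw [Algebra.smul_def, map_mul]
        by_cases hc : c = 0
        · simp only [hc, map_zero, zero_mul]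
          exact zero_le'
        · have hval1 : val (algebraMap L (RatFunc L) c) = 1 := by
            rw [RatFunc.algebraMap_eq_C]
            have := FunctionField.inftyValuation.C L hc
            rw [hval]
            rw [show FunctionField.inftyValuation L = RatFunc.inftyValuation L from rfl, this]
          rw [hval1, one_mul]
          exact hx } with hΩ
  -- every power `X ^ (k * a) * φ w` lies in Ω
  have hmem : ∀ a : ℕ, (RatFunc.X : RatFunc L) ^ (k * a) * φ w ∈ Ω := by
    intro a
    have h0 : ((RatFunc.X : RatFunc L) ^ (k * a)) • w
        ∈ D.N ((-(l * a : ℕ) : ℤ) + (l * a : ℕ)) := by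
      refine (D.iterPeriod a _ _).mpr ?_
      rw [inv_smul_smul₀ (pow_ne_zero _ RatFunc.X_ne_zero)]
      exact hcon _
    rw [show ((-(l * a : ℕ) : ℤ) + (l * a : ℕ)) = 0 by ring] at h0
    have h1 : ((RatFunc.X : RatFunc L) ^ (k * a)) • w
        ∈ Submodule.span L (⋃ s ∈ (S : Set V),
          Set.range fun n : ℕ => (((RatFunc.X : RatFunc L))⁻¹ ^ n) • s) := by
      have := h0
      rw [← SetLike.mem_coe, hS, SetLike.mem_coe] at this
      exact this
    have h2 : φ (((RatFunc.X : RatFunc L) ^ (k * a)) • w)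
        ∈ Submodule.map (φ.restrictScalars L) (Submodule.span L (⋃ s ∈ (S : Set V),
          Set.range fun n : ℕ => (((RatFunc.X : RatFunc L))⁻¹ ^ n) • s)) :=
      Submodule.mem_map_of_mem h1
    rw [Submodule.map_span] at h2
    have hsub : Submodule.span L ((φ.restrictScalars L) '' (⋃ s ∈ (S : Set V),
        Set.range fun n : ℕ => (((RatFunc.X : RatFunc L))⁻¹ ^ n) • s)) ≤ Ω := by
      rw [Submodule.span_le]
      rintro _ ⟨y, hy, rfl⟩
      simp only [Set.mem_iUnion, Set.mem_range] at hy
      obtain ⟨s, hsS, n, rfl⟩ := hy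
      show val ((φ.restrictScalars L) ((((RatFunc.X : RatFunc L))⁻¹ ^ n) • s)) ≤ γ
      have : (φ.restrictScalars L) ((((RatFunc.X : RatFunc L))⁻¹ ^ n) • s)
          = ((RatFunc.X : RatFunc L))⁻¹ ^ n * φ s := by
        rw [LinearMap.restrictScalars_apply, map_smul, smul_eq_mul]
      rw [this, map_mul, map_pow, map_inv₀]
      have hXv : val (RatFunc.X : RatFunc L) = (Multiplicative.ofAdd (1 : ℤ) : Multiplicative ℤ) := by
        rw [hval, show FunctionField.inftyValuation L = RatFunc.inftyValuation L from rfl, RatFunc.inftyValuation.X]; rfl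
      have hle1 : (val (RatFunc.X : RatFunc L))⁻¹ ^ n ≤ 1 := by
        apply pow_le_one'
        rw [hXv, ← WithZero.coe_inv, ← WithZero.coe_one, WithZero.coe_le_coe]
        decide
      calc (val (RatFunc.X : RatFunc L))⁻¹ ^ n * val (φ s)
          ≤ 1 * val (φ s) := mul_le_mul_left hle1 _
        _ = val (φ s) := one_mul _
        _ ≤ γ := by rw [hγ]; exact Finset.le_sup (f := fun s => val (φ s)) (Finset.mem_coe.mp hsS)
    have h3 : φ (((RatFunc.X : RatFunc L) ^ (k * a)) • w) ∈ Ω := hsub h2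
    rwa [map_smul, smul_eq_mul] at h3
  -- derive a contradiction
  have hXv : val (RatFunc.X : RatFunc L) = (Multiplicative.ofAdd (1 : ℤ) : Multiplicative ℤ) := by
    rw [hval, show FunctionField.inftyValuation L = RatFunc.inftyValuation L from rfl, RatFunc.inftyValuation.X]; rfl
  have hwv : val (φ w) = (Multiplicative.ofAdd ((φ w).intDegree) : Multiplicative ℤ) := by
    rw [hval, show FunctionField.inftyValuation L = RatFunc.inftyValuation L from rfl, RatFunc.inftyValuation_apply, RatFunc.inftyValuation_of_nonzero L hφ]; rfl
  have hineq : ∀ a : ℕ, (Multiplicative.ofAdd ((k * a : ℕ) + (φ w).intDegree) :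
      Multiplicative ℤ) ≤ γ := by
    intro a
    have := hmem a
    have hv : val ((RatFunc.X : RatFunc L) ^ (k * a) * φ w)
        = (Multiplicative.ofAdd (((k * a : ℕ) : ℤ) + (φ w).intDegree) : Multiplicative ℤ) := by
      rw [map_mul, map_pow, hXv, hwv, ← WithZero.coe_pow, ← WithZero.coe_mul,
        ← ofAdd_nsmul, ← ofAdd_add]
      simp [nsmul_eq_mul]
    rw [← hv]
    exact this
  -- γ is nonzero since φ w has valuation bounded by γ
  have hγ0 : γ ≠ 0 := by
    intro h0
    have := hineq 0
    rw [h0] at this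
    exact (WithZero.coe_ne_zero) (le_zero_iff.mp this)
  obtain ⟨g, hg⟩ := WithZero.ne_zero_iff_exists.mp hγ0
  have key : ∀ a : ℕ, ((k * a : ℕ) : ℤ) + (φ w).intDegree ≤ g.toAdd := by
    intro a
    have h4 := hineq a
    rw [← hg, WithZero.coe_le_coe] at h4
    exact Multiplicative.ofAdd_le.mp h4
  have hk : 1 ≤ (k : ℤ) := by exact_mod_cast D.pos_k
  set T : ℤ := g.toAdd - (φ w).intDegree with hT
  have h5 := key (T.natAbs + 1)
  have hka : ((T.natAbs + 1 : ℕ) : ℤ) ≤ (k : ℤ) * ((T.natAbs + 1 : ℕ) : ℤ) :=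
    le_mul_of_one_le_left (by positivity) hk
  have habs : T ≤ |T| := le_abs_self T
  push_cast at h5 hka
  linarith

end Aux

/-- a nonzero morphism of abelian `τ`-sheaves (a linear map of the
generic fibres commuting with the structure maps `τ` and preserving the lattices,
i.e. commuting with all `Φ_i` and `τ_i`) forces the weights to agree:
`d/r = d'/r'`, i.e. `d·r' = d'·r`. -/
theorem stmt7 {q : ℕ} (hq : 1 < q) {L : Type} [Field L]
    (frob : L →+* L) (hfrob : ∀ x : L, frob x = x ^ q)
    (σF : RatFunc L →+* RatFunc L)
    (hσF : ∀ p : Polynomial L,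
      σF (algebraMap (Polynomial L) (RatFunc L) p)
        = algebraMap (Polynomial L) (RatFunc L) (p.map frob))
    {V V' : Type} [AddCommGroup V] [Module L V] [Module (RatFunc L) V]
    [IsScalarTower L (RatFunc L) V]
    [AddCommGroup V'] [Module L V'] [Module (RatFunc L) V']
    [IsScalarTower L (RatFunc L) V']
    {r d k l r' d' k' l' : ℕ}
    (A : TauSheafData L σF V r d k l) (B : TauSheafData L σF V' r' d' k' l')
    (f : V →ₗ[RatFunc L] V') (hf : f ≠ 0)
    (hfτ : ∀ v : V, f (A.tau v) = B.tau (f v))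
    (hfM0 : ∀ v ∈ A.M0, f v ∈ B.M0)
    (hfN : ∀ (i : ℤ), ∀ v ∈ A.N i, f v ∈ B.N i) :
    d * r' = d' * r := by
  classical
  -- find a vector in `A.N 0` not killed by `f`
  obtain ⟨v, hv0, hw0⟩ : ∃ v ∈ A.N 0, f v ≠ 0 := by
    by_contra h
    push_neg at h
    apply hf
    have hsub : (A.N 0 : Set V) ⊆ (LinearMap.ker f : Set V) := fun x hx => h x hx
    have hle := Submodule.span_le.mpr hsub
    rw [A.N_full 0] at hle
    exact LinearMap.ker_eq_top.mp (top_le_iff.mp hle)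
  set w : V' := f v with hw
  obtain ⟨m, hm⟩ := B.escape hw0
  -- first family of inequalities: positive powers of X
  have h₁ : ∀ n : ℕ, ¬ (((l * (k' * n) : ℕ) : ℤ) ≤ m + ((l' * (k * n) : ℕ) : ℤ)) := by
    intro n hle
    have hv' : ((RatFunc.X : RatFunc L) ^ (k * (k' * n))) • v
        ∈ A.N ((0 : ℤ) + (l * (k' * n) : ℕ)) := by
      refine (A.iterPeriod (k' * n) 0 _).mpr ?_
      rw [inv_smul_smul₀ (pow_ne_zero _ RatFunc.X_ne_zero)]
      exact hv0
    have hw' := hfN _ _ hv'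
    rw [map_smul] at hw'
    have hw'' : ((RatFunc.X : RatFunc L) ^ (k * (k' * n))) • w
        ∈ B.N (m + (l' * (k * n) : ℕ)) := by
      refine B.N_mono' ?_ hw'
      omega
    have h6 := (B.iterPeriod (k * n) m _).mp hw''
    rw [show k' * (k * n) = k * (k' * n) by ring,
      inv_smul_smul₀ (pow_ne_zero _ RatFunc.X_ne_zero)] at h6
    exact hm h6
  -- second family of inequalities: negative powers of X
  have h₂ : ∀ n : ℕ, ¬ ((-((l * (k' * n) : ℕ) : ℤ)) ≤ m - ((l' * (k * n) : ℕ) : ℤ)) := by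
    intro n hle
    have h0 : v ∈ A.N ((-((l * (k' * n) : ℕ) : ℤ)) + (l * (k' * n) : ℕ)) := by
      rw [show ((-((l * (k' * n) : ℕ) : ℤ)) + ((l * (k' * n) : ℕ) : ℤ)) = 0 by ring]
      exact hv0
    have hv' := (A.iterPeriod (k' * n) _ v).mp h0
    have hw' := hfN _ _ hv'
    rw [map_smul] at hw'
    have hw'' : ((RatFunc.X : RatFunc L) ^ (k * (k' * n)))⁻¹ • w
        ∈ B.N (m - (l' * (k * n) : ℕ)) := B.N_mono' hle hw'
    rw [show k * (k' * n) = k' * (k * n) by ring] at hw''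
    have h6 := (B.iterPeriod (k * n) (m - (l' * (k * n) : ℕ)) w).mpr hw''
    rw [show (m - ((l' * (k * n) : ℕ) : ℤ)) + ((l' * (k * n) : ℕ) : ℤ) = m by ring] at h6
    exact hm h6
  -- deduce equality of growth rates
  have key : (l : ℤ) * k' = (l' : ℤ) * k := by
    by_contra hne
    rcases lt_or_gt_of_ne hne with hlt | hgt
    · -- l*k' < l'*k contradicts h₁
      have := h₁ (m.natAbs + 1)
      push_neg at this
      push_cast at this
      have h7 : (l : ℤ) * k' + 1 ≤ (l' : ℤ) * k := Int.add_one_le_iff.mpr hlt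
      have hmul := mul_le_mul_of_nonneg_right h7 (by positivity : (0 : ℤ) ≤ |m| + 1)
      linarith [this, hmul, neg_abs_le m]
    · -- l*k' > l'*k contradicts h₂
      have := h₂ (m.natAbs + 1)
      push_neg at this
      push_cast at this
      have h7 : (l' : ℤ) * k + 1 ≤ (l : ℤ) * k' := Int.add_one_le_iff.mpr hgt
      have hmul := mul_le_mul_of_nonneg_right h7 (by positivity : (0 : ℤ) ≤ |m| + 1)
      linarith [this, hmul, neg_abs_le m]
  have keyN : l * k' = l' * k := by exact_mod_cast key
  -- conclude by the weight relations
  have h1 := A.weight_rel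
  have h2 := B.weight_rel
  have hll' : 0 < l * l' := Nat.mul_pos A.pos_l B.pos_l
  apply Nat.eq_of_mul_eq_mul_left hll'
  calc (l * l') * (d * r') = (l * d) * (l' * r') := by ring
    _ = (k * r) * (l' * r') := by rw [h1]
    _ = (l' * k) * (r * r') := by ring
    _ = (l * k') * (r * r') := by rw [keyN]
    _ = (k' * r') * (l * r) := by ring
    _ = (l' * d') * (l * r) := by rw [h2]
    _ = (l * l') * (d' * r) := by ring
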